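/- For integers p ≥ 2, q ≤ −2, r ≤ −2 with p|q| + p|r| − |q||r| ≠ 0, the quantity c² arising from the linear system in Section 4 equals p|q||r| / (p|q| + p|r| − |q||r|). -/

import Mathlib

/-- Which family the `i`-th link component belongs to: `0` for the `|r|` components of
the `r`-family, `1` for the `p-1` components of the `p`-family, `2` for the `|q|+1`
components of the `q`-family. -/
def fam15 (ar pp : ℕ) (i : ℕ) : ℕ :=
  if i < ar then 0 else if i < ar + (pp - 1) then 1 else 2

/-- The `(p+|q|+|r|) × (p+|q|+|r|)` linking matrix `L_{p,q,r}` of the framed link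
`𝕃_{p,q,r}` of Figure 4 (case `p ≥ 2`, `q ≤ -2`, `r ≤ -2`): the `|r|` components of the
`r`-family have framing `-1` and pairwise linking `-2`; the `p-1` components of the
`p`-family have framing `-2` and pairwise linking `-1`; the `|q|+1` components of the
`q`-family form the block `A_{|q|}` (zero diagonal, `-1` off-diagonal); each `p`- and
`q`-family component links each `r`-family component once, and the `p`- and `q`-families
do not link each other. -/
def L15mat (pp aq ar : ℕ) : Matrix (Fin (pp + aq + ar)) (Fin (pp + aq + ar)) ℚ :=
  Matrix.of fun i j =>
    if fam15 ar pp i = 0 ∧ fam15 ar pp j = 0 then (if i = j then -1 else -2)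
    else if fam15 ar pp i = 1 ∧ fam15 ar pp j = 1 then (if i = j then -2 else -1)
    else if fam15 ar pp i = 2 ∧ fam15 ar pp j = 2 then (if i = j then 0 else -1)
    else if fam15 ar pp i = 0 ∨ fam15 ar pp j = 0 then -1
    else 0

/-- The solution `b` of the linear system `L_{p,q,r} b = rot`, where `rot` has entry `1`
on the `r`-family components and `0` elsewhere. -/
def b15vec (pp aq ar : ℕ) : Fin (pp + aq + ar) → ℚ := fun i =>
  if fam15 ar pp (i : ℕ) = 0 then (pp * aq : ℚ) / (pp * aq + pp * ar - aq * ar)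
  else if fam15 ar pp (i : ℕ) = 1 then -(ar * aq : ℚ) / (pp * aq + pp * ar - aq * ar)
  else -(pp * ar : ℚ) / (pp * aq + pp * ar - aq * ar)

/-- The rotation vector: `1` on the `r`-family components, `0` elsewhere. -/
def rot15vec (pp aq ar : ℕ) : Fin (pp + aq + ar) → ℚ := fun i =>
  if fam15 ar pp (i : ℕ) = 0 then 1 else 0

/- Auxiliary definitions and lemmas. -/
def Lval15 : ℕ → ℕ → ℚ := fun a b =>
  if a = 0 ∧ b = 0 then -2 else if a = 1 ∧ b = 1 then -1
  else if a = 2 ∧ b = 2 then -1 else if a = 0 ∨ b = 0 then -1 else 0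

def dval15 : ℕ → ℚ := fun a => if a = 0 then 1 else if a = 1 then -1 else 1

def bval15 (pp aq ar : ℕ) : ℕ → ℚ := fun a =>
  if a = 0 then (pp * aq : ℚ) / (pp * aq + pp * ar - aq * ar)
  else if a = 1 then -(ar * aq : ℚ) / (pp * aq + pp * ar - aq * ar)
  else -(pp * ar : ℚ) / (pp * aq + pp * ar - aq * ar)

lemma fam15_cases (ar pp i : ℕ) : fam15 ar pp i = 0 ∨ fam15 ar pp i = 1 ∨ fam15 ar pp i = 2 := by
  unfold fam15; split_ifs <;> simp

lemma L15_entry (pp aq ar : ℕ) (i j : Fin (pp + aq + ar)) :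
    L15mat pp aq ar i j = Lval15 (fam15 ar pp i) (fam15 ar pp j)
      + (if i = j then dval15 (fam15 ar pp i) else 0) := by
  rcases fam15_cases ar pp i with hi | hi | hi <;> rcases fam15_cases ar pp j with hj | hj | hj <;>
    by_cases hij : i = j <;>
    simp_all [L15mat, Lval15, dval15] <;> norm_num

lemma b15_eq (pp aq ar : ℕ) (i : Fin (pp + aq + ar)) :
    b15vec pp aq ar i = bval15 pp aq ar (fam15 ar pp i) := by
  rcases fam15_cases ar pp i with hi | hi | hi <;> simp [b15vec, bval15, hi]

lemma sum_fam15 (pp aq ar : ℕ) (hpp : 1 ≤ pp) (f : ℕ → ℚ) :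
    ∑ j : Fin (pp + aq + ar), f (fam15 ar pp j)
      = (ar : ℚ) * f 0 + ((pp : ℚ) - 1) * f 1 + ((aq : ℚ) + 1) * f 2 := by
  rw [Fin.sum_univ_eq_sum_range (fun j => f (fam15 ar pp j)) (pp + aq + ar)]
  rw [Finset.range_eq_Ico,
    ← Finset.sum_Ico_consecutive _ (Nat.zero_le (ar + (pp - 1))) (by omega : ar + (pp - 1) ≤ pp + aq + ar),
    ← Finset.sum_Ico_consecutive _ (Nat.zero_le ar) (by omega : ar ≤ ar + (pp - 1))]
  have e0 : ∀ j ∈ Finset.Ico 0 ar, f (fam15 ar pp j) = f 0 := fun j hj => by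
    simp only [Finset.mem_Ico] at hj
    have : fam15 ar pp j = 0 := by unfold fam15; split_ifs <;> omega
    rw [this]
  have e1 : ∀ j ∈ Finset.Ico ar (ar + (pp - 1)), f (fam15 ar pp j) = f 1 := fun j hj => by
    simp only [Finset.mem_Ico] at hj
    have : fam15 ar pp j = 1 := by unfold fam15; split_ifs <;> omega
    rw [this]
  have e2 : ∀ j ∈ Finset.Ico (ar + (pp - 1)) (pp + aq + ar), f (fam15 ar pp j) = f 2 :=
    fun j hj => by
    simp only [Finset.mem_Ico] at hj
    have : fam15 ar pp j = 2 := by unfold fam15; split_ifs <;> omega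
    rw [this]
  rw [Finset.sum_congr rfl e0, Finset.sum_congr rfl e1, Finset.sum_congr rfl e2,
    Finset.sum_const, Finset.sum_const, Finset.sum_const]
  simp only [Nat.card_Ico, smul_eq_mul]
  have c1 : ar + (pp - 1) - ar = pp - 1 := by omega
  have c2 : pp + aq + ar - (ar + (pp - 1)) = aq + 1 := by omega
  rw [c1, c2]
  simp only [nsmul_eq_mul, Nat.cast_sub hpp, Nat.cast_add, Nat.cast_one, Nat.sub_zero]

lemma mulVec15 (pp aq ar : ℕ) (hpp : 1 ≤ pp)
    (hE : (pp : ℚ) * aq + (pp : ℚ) * ar - (aq : ℚ) * ar ≠ 0) :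
    (L15mat pp aq ar).mulVec (b15vec pp aq ar) = rot15vec pp aq ar := by
  funext i
  have key : (L15mat pp aq ar).mulVec (b15vec pp aq ar) i
      = ∑ j : Fin (pp + aq + ar),
          (Lval15 (fam15 ar pp i) (fam15 ar pp j) * bval15 pp aq ar (fam15 ar pp j)
            + (if i = j then dval15 (fam15 ar pp i) * bval15 pp aq ar (fam15 ar pp j) else 0)) := by
    simp only [Matrix.mulVec, dotProduct]
    refine Finset.sum_congr rfl fun j _ => ?_
    rw [L15_entry, b15_eq]
    by_cases hij : i = j <;> simp [hij] <;> ring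
  rw [key, Finset.sum_add_distrib, Finset.sum_ite_eq Finset.univ i
      (fun j => dval15 (fam15 ar pp i) * bval15 pp aq ar (fam15 ar pp j)),
    sum_fam15 pp aq ar hpp (fun a => Lval15 (fam15 ar pp (i : ℕ)) a * bval15 pp aq ar a)]
  simp only [Finset.mem_univ, if_true]
  rcases fam15_cases ar pp i with hi | hi | hi <;>
    · rw [hi]
      simp only [rot15vec, hi, Lval15, bval15, dval15, if_true]
      norm_num
      field_simp
      rw [div_eq_iff (by intro h; apply hE; linear_combination h)]
      ring

lemma csq15 (pp aq ar : ℕ) (hpp : 1 ≤ pp)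
    (hE : (pp : ℚ) * aq + (pp : ℚ) * ar - (aq : ℚ) * ar ≠ 0) :
    dotProduct (b15vec pp aq ar) ((L15mat pp aq ar).mulVec (b15vec pp aq ar))
      = (pp : ℚ) * aq * ar / ((pp : ℚ) * aq + (pp : ℚ) * ar - (aq : ℚ) * ar) := by
  rw [mulVec15 pp aq ar hpp hE]
  have : dotProduct (b15vec pp aq ar) (rot15vec pp aq ar)
      = ∑ j : Fin (pp + aq + ar),
          (bval15 pp aq ar (fam15 ar pp j) * (if fam15 ar pp (j : ℕ) = 0 then 1 else 0)) := by
    simp only [dotProduct, rot15vec]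
    exact Finset.sum_congr rfl fun j _ => by rw [b15_eq]
  rw [this, sum_fam15 pp aq ar hpp
      (fun a => bval15 pp aq ar a * (if a = 0 then 1 else 0))]
  simp only [bval15, if_true]
  norm_num
  field_simp

/-- For `p ≥ 2`, `q ≤ -2`, `r ≤ -2` with `p|q| + p|r| - |q||r| ≠ 0`, the quantity
`c² = bᵀ L_{p,q,r} b` arising from the linear system `L_{p,q,r} b = rot` equals
`p|q||r| / (p|q| + p|r| - |q||r|)`. -/
theorem csquare_L_pqr (p q r : ℤ) (hp : 2 ≤ p) (hq : q ≤ -2) (hr : r ≤ -2)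
    (hE : (p : ℚ) * |(q : ℚ)| + (p : ℚ) * |(r : ℚ)| - |(q : ℚ)| * |(r : ℚ)| ≠ 0) :
    (L15mat p.natAbs q.natAbs r.natAbs).mulVec
        (b15vec p.natAbs q.natAbs r.natAbs) = rot15vec p.natAbs q.natAbs r.natAbs ∧
      dotProduct (b15vec p.natAbs q.natAbs r.natAbs)
          ((L15mat p.natAbs q.natAbs r.natAbs).mulVec
            (b15vec p.natAbs q.natAbs r.natAbs)) =
        (p : ℚ) * |(q : ℚ)| * |(r : ℚ)| /
          ((p : ℚ) * |(q : ℚ)| + (p : ℚ) * |(r : ℚ)| - |(q : ℚ)| * |(r : ℚ)|) := by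
  have hp1 : (0:ℤ) < p := by omega
  have h1 : ((p.natAbs : ℚ)) = (p : ℚ) := by
    rw [Nat.cast_natAbs, Int.cast_abs]; exact abs_of_pos (by exact_mod_cast hp1)
  have h2 : ((q.natAbs : ℚ)) = |(q : ℚ)| := by rw [Nat.cast_natAbs, Int.cast_abs]
  have h3 : ((r.natAbs : ℚ)) = |(r : ℚ)| := by rw [Nat.cast_natAbs, Int.cast_abs]
  have hpp : 1 ≤ p.natAbs := by omega
  have hE' : ((p.natAbs : ℚ)) * (q.natAbs : ℚ) + (p.natAbs : ℚ) * (r.natAbs : ℚ)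
      - (q.natAbs : ℚ) * (r.natAbs : ℚ) ≠ 0 := by
    rw [h1, h2, h3]; exact hE
  refine ⟨mulVec15 _ _ _ hpp hE', ?_⟩
  rw [csq15 _ _ _ hpp hE', h1, h2, h3]
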